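/- Assume that Im⟨Au, u⟩ ≤ 0 for all u ∈ U. Then the scattering operator S := Id + 2iTB(A − iB*TB)⁻¹B* is a contraction with respect to the T⁻¹-norm: ‖Sq‖_{T⁻¹} ≤ ‖q‖_{T⁻¹} for all q ∈ W. -/

import Mathlib

noncomputable section
open scoped InnerProductSpace
open LinearMap

variable {Uv W : Type*}
  [NormedAddCommGroup Uv] [InnerProductSpace ℂ Uv] [FiniteDimensional ℂ Uv]
  [NormedAddCommGroup W] [InnerProductSpace ℂ W] [FiniteDimensional ℂ W]

/-- The norm `‖p‖_{T⁻¹} := ⟨T⁻¹p, p⟩^{1/2}` on `W`. -/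
def tinvNorm (T : W →ₗ[ℂ] W) [Invertible T] (p : W) : ℝ :=
  Real.sqrt (⟪(⅟T) p, p⟫_ℂ).re

/-- The impedance-shifted operator `A − iB*TB : U → U`. -/
def impOp (A : Uv →ₗ[ℂ] Uv) (B : Uv →ₗ[ℂ] W) (T : W →ₗ[ℂ] W) : Uv →ₗ[ℂ] Uv :=
  A - Complex.I • (adjoint B ∘ₗ T ∘ₗ B)

/-- The scattering operator `S := Id + 2iTB(A − iB*TB)⁻¹B* : W → W`. -/
def scatterOp (A : Uv →ₗ[ℂ] Uv) (B : Uv →ₗ[ℂ] W) (T : W →ₗ[ℂ] W)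
    [Invertible (impOp A B T)] : W →ₗ[ℂ] W :=
  LinearMap.id + (2 * Complex.I) • (T ∘ₗ B ∘ₗ ⅟(impOp A B T) ∘ₗ adjoint B)

/-- if `Im⟨Au, u⟩ ≤ 0` for all `u` (with the quadratic form of `A`
written in the convention where the pairing is linear in the operator slot, i.e.
`⟨Au, u⟩ = ⟪u, A u⟫` in Mathlib's convention), then the scattering operator
`S = Id + 2iTB(A − iB*TB)⁻¹B*` is a contraction for the `T⁻¹`-norm. -/
theorem scatterOp_contraction
    (A : Uv →ₗ[ℂ] Uv) (B : Uv →ₗ[ℂ] W)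
    (T : W →ₗ[ℂ] W) [Invertible T]
    (hTsa : adjoint T = T)
    (hTpos : ∀ w : W, w ≠ 0 → 0 < (⟪T w, w⟫_ℂ).re)
    [Invertible (impOp A B T)]
    (hA : ∀ u : Uv, (⟪u, A u⟫_ℂ).im ≤ 0) :
    ∀ q : W, tinvNorm T (scatterOp A B T q) ≤ tinvNorm T q := by
  intro q
  set u := ⅟(impOp A B T) (adjoint B q) with hu
  have hKu : impOp A B T u = adjoint B q := by
    rw [hu, ← Module.End.mul_apply, mul_invOf_self, Module.End.one_apply]
  have hS : scatterOp A B T q = q + (2 * Complex.I) • (T (B u)) := by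
    simp [scatterOp, hu, LinearMap.add_apply, LinearMap.smul_apply,
      LinearMap.comp_apply]
  have hTinv : (⅟T) (scatterOp A B T q) = (⅟T) q + (2 * Complex.I) • (B u) := by
    rw [hS, map_add, map_smul, ← Module.End.mul_apply, invOf_mul_self,
      Module.End.one_apply]
  have hTT : ⟪(⅟T) q, T (B u)⟫_ℂ = ⟪q, B u⟫_ℂ := by
    rw [← LinearMap.adjoint_inner_left, hTsa, ← Module.End.mul_apply,
      mul_invOf_self, Module.End.one_apply]
  have hc : ⟪q, B u⟫_ℂ = ⟪impOp A B T u, u⟫_ℂ := by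
    rw [hKu, LinearMap.adjoint_inner_left]
  have hKexp : ⟪impOp A B T u, u⟫_ℂ
      = (starRingEnd ℂ) ⟪u, A u⟫_ℂ + Complex.I * ⟪T (B u), B u⟫_ℂ := by
    simp only [impOp, LinearMap.sub_apply, LinearMap.smul_apply,
      LinearMap.comp_apply, inner_sub_left, inner_smul_left,
      LinearMap.adjoint_inner_left, ← inner_conj_symm u (A u)]
    simp [Complex.conj_I]
  have ht : ⟪B u, T (B u)⟫_ℂ = (starRingEnd ℂ) ⟪T (B u), B u⟫_ℂ := by
    rw [inner_conj_symm]
  have hbq : ⟪B u, q⟫_ℂ = (starRingEnd ℂ) ⟪q, B u⟫_ℂ := by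
    rw [inner_conj_symm]
  have expand : ⟪(⅟T) (scatterOp A B T q), scatterOp A B T q⟫_ℂ
      = ⟪(⅟T) q, q⟫_ℂ + (2 * Complex.I) * ⟪q, B u⟫_ℂ
        - (2 * Complex.I) * ⟪B u, q⟫_ℂ + 4 * ⟪B u, T (B u)⟫_ℂ := by
    rw [hTinv, hS]
    simp only [inner_add_left, inner_add_right, inner_smul_left,
      inner_smul_right, hTT, map_mul, Complex.conj_I, Complex.conj_ofNat]
    ring_nf
    simp [Complex.I_sq]
  have key : (⟪(⅟T) (scatterOp A B T q), scatterOp A B T q⟫_ℂ).re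
      ≤ (⟪(⅟T) q, q⟫_ℂ).re := by
    rw [expand, hbq, hc, hKexp]
    have hA' := hA u
    have haux1 : (⟪A u, u⟫_ℂ).im = -(⟪u, A u⟫_ℂ).im := by
      rw [← inner_conj_symm u (A u)]
      simp only [Complex.conj_im, neg_neg]
    have haux2 : (⟪B u, T (B u)⟫_ℂ).re = (⟪T (B u), B u⟫_ℂ).re := by
      rw [← inner_conj_symm (T (B u)) (B u), Complex.conj_re]
    simp [Complex.add_re, Complex.sub_re, Complex.mul_re, Complex.mul_im,
      Complex.add_im, Complex.I_re, Complex.I_im, Complex.conj_re,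
      Complex.conj_im]
    linarith
  exact Real.sqrt_le_sqrt key
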